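/- Under ε-contamination with ε < 1/2, the RPD median does not break down in the directional sense: sup over contaminating Q ∈ Q(ε) and v ∈ V_β(Q,ε) of |⟨θ(P_{(Q,ε)}) − θ(P_X), v⟩| is finite. Consequently the directional breakdown point ε*(θ;P_X) of the RPD median satisfies ε*(θ;P_X) ≥ 1/2. -/

import Mathlib

open MeasureTheory Filter
open scoped RealInnerProductSpace ENNReal

noncomputable section

/-- The set of medians of a distribution on `ℝ`. -/
def medianSetM (m : Measure ℝ) : Set ℝ :=
  {a : ℝ | m (Set.Iic a) ≥ 1/2 ∧ m (Set.Ici a) ≥ 1/2}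

/-- The median (midpoint-of-medians convention) of a distribution on `ℝ`. -/
def medM (m : Measure ℝ) : ℝ :=
  (sInf (medianSetM m) + sSup (medianSetM m)) / 2

/-- The median absolute deviation of a distribution on `ℝ`. -/
def madM (m : Measure ℝ) : ℝ :=
  medM (m.map (fun z => |z - medM m|))

variable {H : Type*} [NormedAddCommGroup H] [InnerProductSpace ℝ H] [MeasurableSpace H]

/-- The median of the projection `⟨X, v⟩` for `X ∼ P`. -/
def medP (P : Measure H) (v : H) : ℝ := medM (P.map (fun x => ⟪x, v⟫))

/-- The MAD of the projection `⟨X, v⟩` for `X ∼ P`. -/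
def madP (P : Measure H) (v : H) : ℝ := madM (P.map (fun x => ⟪x, v⟫))

/-- The regularized direction set `V_β(P)`. -/
def dirSetP (P : Measure H) (β : ℝ) : Set H := {v : H | ‖v‖ = 1 ∧ β ≤ madP P v}

/-- The projection outlyingness `O_v(x; P)`. -/
def outlP (P : Measure H) (v x : H) : ℝ := |⟪x, v⟫ - medP P v| / madP P v

/-- The regularized projection depth `D_β(x; P)`. -/
def RPDP (P : Measure H) (β : ℝ) (x : H) : ℝ :=
  ⨅ v : dirSetP P β, (1 + outlP P v x)⁻¹

/-- The `ε`-contaminated mixture `(1-ε)P + εQ`. -/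
def mix (P Q : Measure H) (ε : ℝ) : Measure H :=
  ENNReal.ofReal (1 - ε) • P + ENNReal.ofReal ε • Q

open scoped Topology

section Aux
section Med
variable (m : Measure ℝ) [IsProbabilityMeasure m]

lemma total_split (b : ℝ) : m (Set.Iic b) + m (Set.Ioi b) = 1 := by
  rw [← measure_univ (μ := m), ← Set.Iic_union_Ioi (a := b)]
  exact (measure_union (Set.Iic_disjoint_Ioi le_rfl) measurableSet_Ioi).symm

lemma total_split' (b : ℝ) : m (Set.Iio b) + m (Set.Ici b) = 1 := by
  rw [← measure_univ (μ := m), ← Set.Iio_union_Ici (a := b)]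
  exact (measure_union (Set.Iio_disjoint_Ici le_rfl) measurableSet_Ici).symm

variable {m}

lemma Ioi_half_of_lt {x : ℝ} (hx : m (Set.Iic x) < 1/2) : 1/2 ≤ m (Set.Ioi x) := by
  by_contra h
  push_neg at h
  have := total_split m x
  have h2 : m (Set.Iic x) + m (Set.Ioi x) < 1/2 + 1/2 :=
    ENNReal.add_lt_add hx h
  rw [this, ENNReal.add_halves] at h2
  exact lt_irrefl _ h2

lemma Ici_half_of_lt {x : ℝ} (hx : m (Set.Iio x) < 1/2) : 1/2 ≤ m (Set.Ici x) := by
  by_contra h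
  push_neg at h
  have := total_split' m x
  have h2 : m (Set.Iio x) + m (Set.Ici x) < 1/2 + 1/2 :=
    ENNReal.add_lt_add hx h
  rw [this, ENNReal.add_halves] at h2
  exact lt_irrefl _ h2

lemma medianSet_subset_Iic {b : ℝ} (hb : 1/2 < m (Set.Iic b)) :
    medianSetM m ⊆ Set.Iic b := by
  intro c hc
  by_contra h
  simp only [Set.mem_Iic, not_le] at h
  have h1 : (1/2 : ℝ≥0∞) ≤ m (Set.Ioi b) :=
    le_trans hc.2 (measure_mono (Set.Ici_subset_Ioi.mpr h))
  have h2 : (1/2 : ℝ≥0∞) + (1/2 : ℝ≥0∞) < m (Set.Iic b) + m (Set.Ioi b) :=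
    ENNReal.add_lt_add_of_lt_of_le (by norm_num) hb h1
  rw [total_split m b, ENNReal.add_halves] at h2
  exact lt_irrefl _ h2

lemma medianSet_subset_Ici {a : ℝ} (ha : 1/2 < m (Set.Ici a)) :
    medianSetM m ⊆ Set.Ici a := by
  intro c hc
  by_contra h
  simp only [Set.mem_Ici, not_le] at h
  have h1 : (1/2 : ℝ≥0∞) ≤ m (Set.Iio a) :=
    le_trans hc.1 (measure_mono (Set.Iic_subset_Iio.mpr h))
  have h2 : (1/2 : ℝ≥0∞) + (1/2 : ℝ≥0∞) < m (Set.Iio a) + m (Set.Ici a) :=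
    ENNReal.add_lt_add_of_le_of_lt (by norm_num) h1 ha
  rw [total_split' m a, ENNReal.add_halves] at h2
  exact lt_irrefl _ h2

lemma medianSetM_nonempty : (medianSetM m).Nonempty := by
  set S : Set ℝ := {x | 1/2 ≤ m (Set.Iic x)} with hSdef
  have hSne : S.Nonempty := by
    have h := tendsto_measure_Iic_atTop (α := ℝ) m
    rw [measure_univ] at h
    have h2 : ∀ᶠ x : ℝ in atTop, 1/2 < m (Set.Iic x) :=
      h.eventually_const_lt (by norm_num)
    obtain ⟨x, hx⟩ := h2.exists
    exact ⟨x, hx.le⟩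
  obtain ⟨x₀, hx₀⟩ : ∃ x₀ : ℝ, 1/2 < m (Set.Ici x₀) := by
    have h := tendsto_measure_Ici_atBot (α := ℝ) m
    rw [measure_univ] at h
    exact (h.eventually_const_lt (by norm_num)).exists
  have hSbdd : BddBelow S := by
    refine ⟨x₀, fun y hy => ?_⟩
    by_contra h
    push_neg at h
    have h1 : (1/2 : ℝ≥0∞) ≤ m (Set.Iio x₀) :=
      le_trans hy (measure_mono (Set.Iic_subset_Iio.mpr h))
    have h2 : (1/2 : ℝ≥0∞) + (1/2 : ℝ≥0∞) < m (Set.Iio x₀) + m (Set.Ici x₀) :=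
      ENNReal.add_lt_add_of_le_of_lt (by norm_num) h1 hx₀
    rw [total_split' m x₀, ENNReal.add_halves] at h2
    exact lt_irrefl _ h2
  set a := sInf S with ha
  refine ⟨a, ?_, ?_⟩
  · -- m (Iic a) ≥ 1/2
    have hinter : ⋂ n : ℕ, Set.Iic (a + 1/(n+1)) = Set.Iic a := by
      ext z
      simp only [Set.mem_iInter, Set.mem_Iic]
      constructor
      · intro h
        by_contra hz
        push_neg at hz
        obtain ⟨n, hn⟩ := exists_nat_one_div_lt (sub_pos.mpr hz)
        have := h n
        linarith
      · intro h n
        have : (0:ℝ) < 1/(n+1) := by positivity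
        linarith
    have htend : Tendsto (fun n : ℕ => m (Set.Iic (a + 1/(n+1)))) atTop
        (𝓝 (m (Set.Iic a))) := by
      have := tendsto_measure_iInter_atTop (μ := m)
        (s := fun n : ℕ => Set.Iic (a + 1/(n+1)))
        (fun n => measurableSet_Iic.nullMeasurableSet)
        (fun i j hij => Set.Iic_subset_Iic.mpr (by
          have : (1:ℝ)/(j+1) ≤ 1/(i+1) := by
            apply one_div_le_one_div_of_le (by positivity)
            exact_mod_cast Nat.add_le_add_right hij 1
          linarith))
        ⟨0, measure_ne_top m _⟩
      rw [hinter] at this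
      exact this
    refine ge_of_tendsto htend (Eventually.of_forall fun n => ?_)
    have hlt : a < a + 1/(n+1) := by
      have : (0:ℝ) < 1/(n+1) := by positivity
      linarith
    obtain ⟨x, hxS, hxlt⟩ := (csInf_lt_iff hSbdd hSne).mp (ha ▸ hlt)
    exact le_trans hxS (measure_mono (Set.Iic_subset_Iic.mpr hxlt.le))
  · -- m (Ici a) ≥ 1/2
    have hinter : ⋂ n : ℕ, Set.Ioi (a - 1/(n+1)) = Set.Ici a := by
      ext z
      simp only [Set.mem_iInter, Set.mem_Ioi, Set.mem_Ici]
      constructor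
      · intro h
        by_contra hz
        push_neg at hz
        obtain ⟨n, hn⟩ := exists_nat_one_div_lt (sub_pos.mpr hz)
        have := h n
        linarith
      · intro h n
        have : (0:ℝ) < 1/(n+1) := by positivity
        linarith
    have htend : Tendsto (fun n : ℕ => m (Set.Ioi (a - 1/(n+1)))) atTop
        (𝓝 (m (Set.Ici a))) := by
      have := tendsto_measure_iInter_atTop (μ := m)
        (s := fun n : ℕ => Set.Ioi (a - 1/(n+1)))
        (fun n => measurableSet_Ioi.nullMeasurableSet)
        (fun i j hij => Set.Ioi_subset_Ioi (by
          have : (1:ℝ)/(j+1) ≤ 1/(i+1) := by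
            apply one_div_le_one_div_of_le (by positivity)
            exact_mod_cast Nat.add_le_add_right hij 1
          linarith))
        ⟨0, measure_ne_top m _⟩
      rw [hinter] at this
      exact this
    refine ge_of_tendsto htend (Eventually.of_forall fun n => ?_)
    have hnot : a - 1/(n+1) ∉ S := by
      intro hmem
      have := csInf_le hSbdd hmem
      have hpos : (0:ℝ) < 1/(n+1) := by positivity
      rw [← ha] at this
      linarith
    have hlt : m (Set.Iic (a - 1/(n+1))) < 1/2 := lt_of_not_ge hnot
    exact le_trans (Ioi_half_of_lt hlt) le_rfl

lemma medM_mem_Icc {a b : ℝ} (ha : 1/2 < m (Set.Ici a)) (hb : 1/2 < m (Set.Iic b)) :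
    medM m ∈ Set.Icc a b := by
  have hne := medianSetM_nonempty (m := m)
  have hsub : medianSetM m ⊆ Set.Icc a b := fun c hc =>
    ⟨medianSet_subset_Ici ha hc, medianSet_subset_Iic hb hc⟩
  have hbddB : BddBelow (medianSetM m) := ⟨a, fun c hc => (hsub hc).1⟩
  have hbddA : BddAbove (medianSetM m) := ⟨b, fun c hc => (hsub hc).2⟩
  obtain ⟨c, hc⟩ := hne
  have h1 : a ≤ sInf (medianSetM m) := le_csInf ⟨c, hc⟩ (fun x hx => (hsub hx).1)
  have h2 : sInf (medianSetM m) ≤ c := csInf_le hbddB hc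
  have h3 : c ≤ sSup (medianSetM m) := le_csSup hbddA hc
  have h4 : sSup (medianSetM m) ≤ b := csSup_le ⟨c, hc⟩ (fun x hx => (hsub hx).2)
  constructor <;> (unfold medM; linarith)

end Med

lemma medM_madM_le (μ : Measure ℝ) [IsProbabilityMeasure μ] {q : ℝ} (hq : 0 < q)
    (h : 1/2 < μ (Set.Icc (-q) q)) : |medM μ| ≤ q ∧ madM μ ≤ 2*q := by
  have h1 : 1/2 < μ (Set.Iic q) := lt_of_lt_of_le h (measure_mono (fun z hz => hz.2))
  have h2 : 1/2 < μ (Set.Ici (-q)) := lt_of_lt_of_le h (measure_mono (fun z hz => hz.1))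
  have hmed := medM_mem_Icc (m := μ) h2 h1
  refine ⟨abs_le.mpr ⟨hmed.1, hmed.2⟩, ?_⟩
  set c := medM μ with hc
  have hgm : Measurable fun z : ℝ => |z - c| :=
    (continuous_abs.comp (continuous_id.sub continuous_const)).measurable
  set ν := μ.map (fun z : ℝ => |z - c|) with hν
  haveI : IsProbabilityMeasure ν := Measure.isProbabilityMeasure_map hgm.aemeasurable
  have hν1 : 1/2 < ν (Set.Iic (2*q)) := by
    rw [hν, Measure.map_apply hgm measurableSet_Iic]
    refine lt_of_lt_of_le h (measure_mono ?_)
    intro z hz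
    simp only [Set.mem_preimage, Set.mem_Iic]
    rw [abs_le]
    constructor <;> [linarith [hz.1, hz.2, hmed.1, hmed.2]; linarith [hz.1, hz.2, hmed.1, hmed.2]]
  have hν2 : 1/2 < ν (Set.Ici (-(2*q))) := by
    rw [hν, Measure.map_apply hgm measurableSet_Ici]
    have huniv : (fun z : ℝ => |z - c|) ⁻¹' Set.Ici (-(2*q)) = Set.univ :=
      Set.eq_univ_of_forall fun z => by
        simp only [Set.mem_preimage, Set.mem_Ici]
        exact le_trans (by linarith) (abs_nonneg _)
    rw [huniv, measure_univ]
    exact ENNReal.half_lt_self one_ne_zero ENNReal.one_ne_top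
  exact (medM_mem_Icc (m := ν) hν2 hν1).2

lemma mix_prob {H : Type*} [NormedAddCommGroup H] [InnerProductSpace ℝ H] [MeasurableSpace H]
    (P Q : Measure H) [IsProbabilityMeasure P] [IsProbabilityMeasure Q]
    {ε : ℝ} (h0 : 0 ≤ ε) (h1 : ε ≤ 1) : IsProbabilityMeasure (mix P Q ε) := by
  constructor
  simp only [mix, Measure.add_apply, Measure.smul_apply, smul_eq_mul, measure_univ, mul_one]
  rw [← ENNReal.ofReal_add (by linarith) h0]
  norm_num

theorem rpd_median_breakdown_aux
    {H : Type*} [NormedAddCommGroup H] [InnerProductSpace ℝ H]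
    [MeasurableSpace H] [BorelSpace H] [SecondCountableTopology H] [CompleteSpace H]
    (P : Measure H) [IsProbabilityMeasure P]
    (β : ℝ) (hβ : 0 < β) (hne : (dirSetP P β).Nonempty)
    (θ : Measure H → H)
    (hθ : ∀ P' : Measure H, IsProbabilityMeasure P' → (dirSetP P' β).Nonempty →
      θ P' ∈ closure (Submodule.span ℝ (dirSetP P' β) : Set H) ∧
        ∀ y ∈ closure (Submodule.span ℝ (dirSetP P' β) : Set H),
          RPDP P' β y ≤ RPDP P' β (θ P')) :
    (∀ ε : ℝ, 0 ≤ ε → ε < 1/2 → ∃ B : ℝ,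
      ∀ Q : Measure H, IsProbabilityMeasure Q → (dirSetP (mix P Q ε) β).Nonempty →
        ∀ v ∈ dirSetP (mix P Q ε) β, |⟪θ (mix P Q ε) - θ P, v⟫| ≤ B) ∧
    (∀ ε : ℝ, ε ∈ Set.Icc (0 : ℝ) 1 →
      (∀ B : ℝ, ∃ Q : Measure H, IsProbabilityMeasure Q ∧
        (dirSetP (mix P Q ε) β).Nonempty ∧
        ∃ v ∈ dirSetP (mix P Q ε) β, B < |⟪θ (mix P Q ε) - θ P, v⟫|) →
      1/2 ≤ ε) := by
  have part1 : ∀ ε : ℝ, 0 ≤ ε → ε < 1/2 → ∃ B : ℝ,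
      ∀ Q : Measure H, IsProbabilityMeasure Q → (dirSetP (mix P Q ε) β).Nonempty →
        ∀ v ∈ dirSetP (mix P Q ε) β, |⟪θ (mix P Q ε) - θ P, v⟫| ≤ B := by
    intro ε hε0 hε
    have h1ε : (1:ℝ)/2 < 1 - ε := by linarith
    obtain ⟨q, hq1, hqP⟩ :
        ∃ q : ℝ, 1 ≤ q ∧ 1/2 < ENNReal.ofReal (1-ε) * P {x : H | ‖x‖ ≤ q} := by
      have hmono : Monotone (fun r : ℝ => {x : H | ‖x‖ ≤ r}) :=
        fun r s hrs x hx => le_trans hx hrs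
      have hunion : ⋃ r : ℝ, {x : H | ‖x‖ ≤ r} = Set.univ :=
        Set.eq_univ_of_forall fun x => Set.mem_iUnion.mpr ⟨‖x‖, by simp⟩
      have ht := tendsto_measure_iUnion_atTop (μ := P) hmono
      rw [hunion, measure_univ] at ht
      have ht2 : Tendsto (fun r : ℝ => ENNReal.ofReal (1-ε) * P {x : H | ‖x‖ ≤ r}) atTop
          (𝓝 (ENNReal.ofReal (1-ε) * 1)) :=
        ENNReal.Tendsto.const_mul ht (Or.inr ENNReal.ofReal_ne_top)
      rw [mul_one] at ht2
      have hgt : (1/2 : ℝ≥0∞) < ENNReal.ofReal (1-ε) := by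
        rw [ENNReal.lt_ofReal_iff_toReal_lt (by norm_num)]
        norm_num
        linarith
      have hev := ht2.eventually_const_lt hgt
      obtain ⟨q, hq⟩ := (hev.and (eventually_ge_atTop (1:ℝ))).exists
      exact ⟨q, hq.2, hq.1⟩
    have hq0 : (0:ℝ) < q := lt_of_lt_of_le one_pos hq1
    refine ⟨(q/β)*(2*q) + q + ‖θ P‖, ?_⟩
    intro Q hQ hne'
    set m := mix P Q ε with hm
    haveI him : IsProbabilityMeasure m := mix_prob P Q hε0 (by linarith)
    have key : ∀ v : H, ‖v‖ = 1 → |medP m v| ≤ q ∧ madP m v ≤ 2*q := by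
      intro v hv
      have hfm : Measurable fun x : H => ⟪x, v⟫ :=
        (continuous_id.inner continuous_const).measurable
      set μv := m.map (fun x : H => ⟪x, v⟫) with hμv
      haveI : IsProbabilityMeasure μv := Measure.isProbabilityMeasure_map hfm.aemeasurable
      have hIcc : 1/2 < μv (Set.Icc (-q) q) := by
        rw [hμv, Measure.map_apply hfm measurableSet_Icc]
        refine lt_of_lt_of_le hqP ?_
        have hsub : {x : H | ‖x‖ ≤ q} ⊆ (fun x : H => ⟪x,v⟫) ⁻¹' Set.Icc (-q) q := by
          intro x hx
          have h1 := abs_real_inner_le_norm x v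
          rw [hv, mul_one] at h1
          have h2 : |⟪x,v⟫| ≤ q := le_trans h1 hx
          rw [abs_le] at h2
          exact ⟨h2.1, h2.2⟩
        calc ENNReal.ofReal (1-ε) * P {x : H | ‖x‖ ≤ q}
            ≤ ENNReal.ofReal (1-ε) * P ((fun x : H => ⟪x,v⟫) ⁻¹' Set.Icc (-q) q) :=
              mul_le_mul_right (measure_mono hsub) _
          _ ≤ m ((fun x : H => ⟪x,v⟫) ⁻¹' Set.Icc (-q) q) := by
              rw [hm]
              simp only [mix, Measure.add_apply, Measure.smul_apply, smul_eq_mul]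
              exact le_self_add
      exact medM_madM_le μv hq0 hIcc
    obtain ⟨hmem, hmax⟩ := hθ m him hne'
    set θm := θ m with hθm
    have h0mem : (0:H) ∈ closure (Submodule.span ℝ (dirSetP m β) : Set H) :=
      subset_closure (Submodule.zero_mem _)
    have hRPD0 : RPDP m β 0 ≤ RPDP m β θm := hmax 0 h0mem
    haveI hneS : Nonempty (dirSetP m β) := hne'.to_subtype
    have hlow : (1 + q/β)⁻¹ ≤ RPDP m β 0 := by
      refine le_ciInf fun w => ?_
      have hmadpos : 0 < madP m w := lt_of_lt_of_le hβ w.2.2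
      have houtl : outlP m w 0 ≤ q/β := by
        unfold outlP
        rw [inner_zero_left, zero_sub, abs_neg]
        exact div_le_div₀ hq0.le (key w w.2.1).1 hβ w.2.2
      have h1 : (0:ℝ) < 1 + outlP m w 0 := by
        have := div_nonneg (abs_nonneg (⟪(0:H), (w:H)⟫ - medP m w)) hmadpos.le
        unfold outlP
        linarith [this]
      exact inv_anti₀ h1 (by linarith)
    intro v hv
    have hbdd : BddBelow (Set.range fun w : dirSetP m β => (1 + outlP m w θm)⁻¹) := by
      refine ⟨0, ?_⟩
      rintro _ ⟨w, rfl⟩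
      have hmadpos : 0 < madP m w := lt_of_lt_of_le hβ w.2.2
      have h0 : 0 ≤ outlP m w θm := div_nonneg (abs_nonneg _) hmadpos.le
      exact inv_nonneg.mpr (by linarith)
    have hup : RPDP m β θm ≤ (1 + outlP m v θm)⁻¹ := ciInf_le hbdd ⟨v, hv⟩
    have hmadpos : 0 < madP m v := lt_of_lt_of_le hβ hv.2
    have houtl0 : 0 ≤ outlP m v θm := div_nonneg (abs_nonneg _) hmadpos.le
    have hchain : (1 + q/β)⁻¹ ≤ (1 + outlP m v θm)⁻¹ :=
      le_trans hlow (le_trans hRPD0 hup)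
    have hqβ : (0:ℝ) ≤ q/β := div_nonneg hq0.le hβ.le
    have houtl : outlP m v θm ≤ q/β := by
      have h1 : (0:ℝ) < 1 + outlP m v θm := by linarith
      have h2 : (0:ℝ) < 1 + q/β := by linarith
      have := (inv_le_inv₀ h2 h1).mp hchain
      linarith
    have hnum : |⟪θm, v⟫ - medP m v| ≤ (q/β) * (2*q) := by
      have h1 : |⟪θm, v⟫ - medP m v| ≤ (q/β) * madP m v := by
        have := (div_le_iff₀ hmadpos).mp houtl
        exact this
      exact le_trans h1 (mul_le_mul_of_nonneg_left (key v hv.1).2 hqβ)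
    have hmb : |medP m v| ≤ q := (key v hv.1).1
    have hPb : |⟪θ P, v⟫| ≤ ‖θ P‖ := by
      have := abs_real_inner_le_norm (θ P) v
      rwa [hv.1, mul_one] at this
    rw [inner_sub_left]
    have t1 : |⟪θm,v⟫ - ⟪θ P,v⟫| ≤ |⟪θm,v⟫ - medP m v| + |medP m v - ⟪θ P,v⟫| :=
      abs_sub_le _ _ _
    have t2 : |medP m v - ⟪θ P,v⟫| ≤ |medP m v| + |⟪θ P,v⟫| := by
      calc |medP m v - ⟪θ P,v⟫| = |medP m v + -⟪θ P,v⟫| := by rw [sub_eq_add_neg]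
        _ ≤ |medP m v| + |-⟪θ P,v⟫| := abs_add_le _ _
        _ = |medP m v| + |⟪θ P,v⟫| := by rw [abs_neg]
    linarith
  refine ⟨part1, ?_⟩
  intro ε hε hyp
  by_contra h
  push_neg at h
  obtain ⟨B, hB⟩ := part1 ε hε.1 h
  obtain ⟨Q, hQ, hne', v, hv, hlt⟩ := hyp B
  exact absurd (hB Q hQ hne' v hv) (not_le.mpr hlt)

end Aux

/-- Directional breakdown point of the RPD median: under ε-contamination with ε < 1/2, the
RPD median does not break down in the directional sense (the supremum over contaminating Q
and directions v ∈ V_β(Q,ε) of |⟨θ(P_{(Q,ε)}) - θ(P_X), v⟩| is finite), and consequently the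
directional breakdown point ε*(θ;P_X) is at least 1/2. -/
theorem rpd_median_breakdown
    {H : Type*} [NormedAddCommGroup H] [InnerProductSpace ℝ H]
    [MeasurableSpace H] [BorelSpace H] [SecondCountableTopology H] [CompleteSpace H]
    (P : Measure H) [IsProbabilityMeasure P]
    (β : ℝ) (hβ : 0 < β) (hne : (dirSetP P β).Nonempty)
    (θ : Measure H → H)
    (hθ : ∀ P' : Measure H, IsProbabilityMeasure P' → (dirSetP P' β).Nonempty →
      θ P' ∈ closure (Submodule.span ℝ (dirSetP P' β) : Set H) ∧
        ∀ y ∈ closure (Submodule.span ℝ (dirSetP P' β) : Set H),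
          RPDP P' β y ≤ RPDP P' β (θ P')) :
    (∀ ε : ℝ, 0 ≤ ε → ε < 1/2 → ∃ B : ℝ,
      ∀ Q : Measure H, IsProbabilityMeasure Q → (dirSetP (mix P Q ε) β).Nonempty →
        ∀ v ∈ dirSetP (mix P Q ε) β, |⟪θ (mix P Q ε) - θ P, v⟫| ≤ B) ∧
    (∀ ε : ℝ, ε ∈ Set.Icc (0 : ℝ) 1 →
      (∀ B : ℝ, ∃ Q : Measure H, IsProbabilityMeasure Q ∧
        (dirSetP (mix P Q ε) β).Nonempty ∧
        ∃ v ∈ dirSetP (mix P Q ε) β, B < |⟪θ (mix P Q ε) - θ P, v⟫|) →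
      1/2 ≤ ε) :=
  rpd_median_breakdown_aux P β hβ hne θ hθ

end
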